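/- The number of alternating, 132-avoiding permutations of length 2n+1 equals the n-th Catalan number C_n, and hence equals the number of 132-avoiding permutations of length n. -/

import Mathlib

open Equiv

/-- The word `w` contains the pattern `p`: some subsequence of `w` is
order-isomorphic to `p`. -/
def Contains {α β : Type*} [LT α] [LT β] {n k : ℕ} (w : Fin n → α) (p : Fin k → β) : Prop :=
  ∃ f : Fin k → Fin n, StrictMono f ∧ ∀ i j : Fin k, p i < p j ↔ w (f i) < w (f j)

/-- The pattern 132 (written with 0-indexed values as (0,2,1)). -/
def pat132 : Fin 3 → ℕ := ![0, 2, 1]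

/-- `w` avoids the pattern 132. -/
def Avoids132 {n : ℕ} (w : Equiv.Perm (Fin n)) : Prop :=
  ¬ Contains (fun i => w i) pat132

/-- Pattern containment between permutations. -/
def ContainsP {n k : ℕ} (w : Equiv.Perm (Fin n)) (p : Equiv.Perm (Fin k)) : Prop :=
  Contains (fun i => w i) (fun i => p i)

/-- `w` is (up-down) alternating: `w 0 < w 1 > w 2 < w 3 > ⋯` (0-indexed). -/
def Alternating {m : ℕ} (w : Equiv.Perm (Fin m)) : Prop :=
  ∀ i : ℕ, ∀ h : i + 1 < m,
    (i % 2 = 0 → w ⟨i, by omega⟩ < w ⟨i + 1, h⟩) ∧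
    (i % 2 = 1 → w ⟨i + 1, h⟩ < w ⟨i, by omega⟩)

/-- The even-indexed (in 1-indexed terms: `w₂, w₄, …, w₂ₙ`) entries of `w`
are order-isomorphic to `u`. -/
def OrderIsoEven {n : ℕ} (w : Equiv.Perm (Fin (2 * n + 1))) (u : Equiv.Perm (Fin n)) : Prop :=
  ∀ i j : Fin n, u i < u j ↔
    w ⟨2 * (i : ℕ) + 1, by have := i.isLt; omega⟩ < w ⟨2 * (j : ℕ) + 1, by have := j.isLt; omega⟩

lemma pat132_val (t : Fin 3) : pat132 t = if t.1 = 0 then 0 else if t.1 = 1 then 2 else 1 := by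
  rcases t with ⟨t, ht⟩
  interval_cases t <;> rfl

lemma contains132_iff {n : ℕ} (w : Perm (Fin n)) :
    Contains (fun i => w i) pat132 ↔
      ∃ i j k : Fin n, i < j ∧ j < k ∧ w i < w k ∧ w k < w j := by
  constructor
  · rintro ⟨f, hf, hiff⟩
    refine ⟨f 0, f 1, f 2, hf (by decide), hf (by decide), ?_, ?_⟩
    · exact (hiff 0 2).1 (by decide)
    · exact (hiff 2 1).1 (by decide)
  · rintro ⟨i, j, k, hij, hjk, h1, h2⟩
    rw [Fin.lt_def] at hij hjk h1 h2
    have hw : (w i : ℕ) < w j := h1.trans h2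
    refine ⟨fun t => if t.1 = 0 then i else if t.1 = 1 then j else k, ?_, ?_⟩
    · rintro ⟨a, ha⟩ ⟨b, hb⟩ hab
      rw [Fin.lt_def] at hab
      simp only [Fin.lt_def]
      interval_cases a <;> interval_cases b <;> simp <;> omega
    · rintro ⟨a, ha⟩ ⟨b, hb⟩
      simp only [pat132_val, Fin.lt_def]
      interval_cases a <;> interval_cases b <;> simp <;> omega

lemma avoids132_iff {n : ℕ} (w : Perm (Fin n)) :
    Avoids132 w ↔ ∀ i j k : Fin n, i < j → j < k → ¬ (w i < w k ∧ w k < w j) := by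
  rw [Avoids132, contains132_iff]
  push_neg
  tauto

def glueF {m : ℕ} (a : ℕ) (h : a ≤ m) (w1 : Perm (Fin a)) (w2 : Perm (Fin (m - a)))
    (i : Fin (m + 1)) : Fin (m + 1) :=
  if hi : (i : ℕ) < a then
    ⟨(w1 ⟨i, hi⟩ : ℕ) + (m - a), by have := (w1 ⟨i, hi⟩).isLt; omega⟩
  else if hi2 : (i : ℕ) = a then ⟨m, by omega⟩
  else ⟨(w2 ⟨(i : ℕ) - (a + 1), by have := i.isLt; omega⟩ : ℕ), by
    have := (w2 ⟨(i : ℕ) - (a + 1), by have := i.isLt; omega⟩).isLt; omega⟩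

lemma glueF_lt {m a : ℕ} (h : a ≤ m) (w1 : Perm (Fin a)) (w2 : Perm (Fin (m - a)))
    (i : Fin (m + 1)) (hi : (i : ℕ) < a) :
    (glueF a h w1 w2 i : ℕ) = (w1 ⟨i, hi⟩ : ℕ) + (m - a) := by
  simp [glueF, hi]

lemma glueF_eq {m a : ℕ} (h : a ≤ m) (w1 : Perm (Fin a)) (w2 : Perm (Fin (m - a)))
    (i : Fin (m + 1)) (hi : (i : ℕ) = a) :
    (glueF a h w1 w2 i : ℕ) = m := by
  simp [glueF, hi]

lemma glueF_gt {m a : ℕ} (h : a ≤ m) (w1 : Perm (Fin a)) (w2 : Perm (Fin (m - a)))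
    (i : Fin (m + 1)) (hi : a < (i : ℕ)) :
    (glueF a h w1 w2 i : ℕ)
      = (w2 ⟨(i : ℕ) - (a + 1), by have := i.isLt; omega⟩ : ℕ) := by
  rw [glueF, dif_neg (by omega : ¬ (i : ℕ) < a), dif_neg (by omega : ¬ (i : ℕ) = a)]

lemma glueF_inj {m a : ℕ} (h : a ≤ m) (w1 : Perm (Fin a)) (w2 : Perm (Fin (m - a))) :
    Function.Injective (glueF a h w1 w2) := by
  intro i j hij
  have hij' : (glueF a h w1 w2 i : ℕ) = (glueF a h w1 w2 j : ℕ) := by rw [hij]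
  have hi := i.isLt
  have hj := j.isLt
  rcases lt_trichotomy (i : ℕ) a with hi1 | hi1 | hi1 <;>
    rcases lt_trichotomy (j : ℕ) a with hj1 | hj1 | hj1
  · rw [glueF_lt h w1 w2 i hi1, glueF_lt h w1 w2 j hj1] at hij'
    have : w1 ⟨i, hi1⟩ = w1 ⟨j, hj1⟩ := Fin.ext (by omega)
    have := w1.injective this
    exact Fin.ext (by simpa [Fin.ext_iff] using this)
  · rw [glueF_lt h w1 w2 i hi1, glueF_eq h w1 w2 j hj1] at hij'
    have := (w1 ⟨i, hi1⟩).isLt; omega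
  · rw [glueF_lt h w1 w2 i hi1, glueF_gt h w1 w2 j hj1] at hij'
    have := (w2 ⟨(j : ℕ) - (a + 1), by omega⟩).isLt; omega
  · rw [glueF_eq h w1 w2 i hi1, glueF_lt h w1 w2 j hj1] at hij'
    have := (w1 ⟨j, hj1⟩).isLt; omega
  · exact Fin.ext (by omega)
  · rw [glueF_eq h w1 w2 i hi1, glueF_gt h w1 w2 j hj1] at hij'
    have := (w2 ⟨(j : ℕ) - (a + 1), by omega⟩).isLt; omega
  · rw [glueF_gt h w1 w2 i hi1, glueF_lt h w1 w2 j hj1] at hij'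
    have := (w2 ⟨(i : ℕ) - (a + 1), by omega⟩).isLt; omega
  · rw [glueF_gt h w1 w2 i hi1, glueF_eq h w1 w2 j hj1] at hij'
    have := (w2 ⟨(i : ℕ) - (a + 1), by omega⟩).isLt; omega
  · rw [glueF_gt h w1 w2 i hi1, glueF_gt h w1 w2 j hj1] at hij'
    have : w2 ⟨(i : ℕ) - (a + 1), by omega⟩ = w2 ⟨(j : ℕ) - (a + 1), by omega⟩ :=
      Fin.ext (by omega)
    have := w2.injective this
    exact Fin.ext (by simp [Fin.ext_iff] at this; omega)

noncomputable def glue {m : ℕ} (a : ℕ) (h : a ≤ m) (w1 : Perm (Fin a)) (w2 : Perm (Fin (m - a))) :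
    Perm (Fin (m + 1)) :=
  Equiv.ofBijective _ (Finite.injective_iff_bijective.mp (glueF_inj h w1 w2))

lemma glue_apply {m a : ℕ} (h : a ≤ m) (w1 : Perm (Fin a)) (w2 : Perm (Fin (m - a)))
    (i : Fin (m + 1)) : glue a h w1 w2 i = glueF a h w1 w2 i := rfl


lemma glue_lt {m a : ℕ} (h : a ≤ m) (w1 : Perm (Fin a)) (w2 : Perm (Fin (m - a)))
    (i : Fin (m + 1)) (hi : (i : ℕ) < a) :
    (glue a h w1 w2 i : ℕ) = (w1 ⟨i, hi⟩ : ℕ) + (m - a) :=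
  glueF_lt h w1 w2 i hi

lemma glue_eq {m a : ℕ} (h : a ≤ m) (w1 : Perm (Fin a)) (w2 : Perm (Fin (m - a)))
    (i : Fin (m + 1)) (hi : (i : ℕ) = a) :
    (glue a h w1 w2 i : ℕ) = m :=
  glueF_eq h w1 w2 i hi

lemma glue_gt {m a : ℕ} (h : a ≤ m) (w1 : Perm (Fin a)) (w2 : Perm (Fin (m - a)))
    (i : Fin (m + 1)) (hi : a < (i : ℕ)) :
    (glue a h w1 w2 i : ℕ)
      = (w2 ⟨(i : ℕ) - (a + 1), by have := i.isLt; omega⟩ : ℕ) :=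
  glueF_gt h w1 w2 i hi

lemma glue_lt' {m a : ℕ} (h : a ≤ m) (w1 : Perm (Fin a)) (w2 : Perm (Fin (m - a)))
    (i : Fin a) :
    (glue a h w1 w2 ⟨(i : ℕ), by have := i.isLt; omega⟩ : ℕ) = (w1 i : ℕ) + (m - a) := by
  rw [glue_lt h w1 w2 _ (by simpa using i.isLt)]

lemma glue_gt' {m a : ℕ} (h : a ≤ m) (w1 : Perm (Fin a)) (w2 : Perm (Fin (m - a)))
    (i : Fin (m - a)) :
    (glue a h w1 w2 ⟨a + 1 + (i : ℕ), by have := i.isLt; omega⟩ : ℕ) = (w2 i : ℕ) := by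
  rw [glue_gt h w1 w2 _ (by simp; omega)]
  exact congrArg (fun t => ((w2 t : ℕ))) (by apply Fin.ext; simp)

lemma avoids_glue_iff {m a : ℕ} (h : a ≤ m) (w1 : Perm (Fin a)) (w2 : Perm (Fin (m - a))) :
    Avoids132 (glue a h w1 w2) ↔ Avoids132 w1 ∧ Avoids132 w2 := by
  constructor
  · intro hgav
    rw [avoids132_iff] at hgav
    rw [avoids132_iff w1, avoids132_iff w2]
    constructor
    · rintro i j k hij hjk ⟨h1, h2⟩
      rw [Fin.lt_def] at hij hjk h1 h2
      have hii := i.isLt; have hjj := j.isLt; have hkk := k.isLt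
      have e1 := glue_lt' h w1 w2 i
      have e2 := glue_lt' h w1 w2 j
      have e3 := glue_lt' h w1 w2 k
      refine hgav ⟨i, by omega⟩ ⟨j, by omega⟩ ⟨k, by omega⟩
        (by rw [Fin.lt_def]; exact hij) (by rw [Fin.lt_def]; exact hjk)
        ⟨?_, ?_⟩ <;> rw [Fin.lt_def] <;> omega
    · rintro i j k hij hjk ⟨h1, h2⟩
      rw [Fin.lt_def] at hij hjk h1 h2
      have hii := i.isLt; have hjj := j.isLt; have hkk := k.isLt
      have e1 := glue_gt' h w1 w2 i
      have e2 := glue_gt' h w1 w2 j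
      have e3 := glue_gt' h w1 w2 k
      refine hgav ⟨a + 1 + i, by omega⟩ ⟨a + 1 + j, by omega⟩ ⟨a + 1 + k, by omega⟩
        (by rw [Fin.lt_def]; simp; omega) (by rw [Fin.lt_def]; simp; omega)
        ⟨?_, ?_⟩ <;> rw [Fin.lt_def] <;> omega
  · rintro ⟨h1av, h2av⟩
    rw [avoids132_iff] at h1av h2av ⊢
    rintro i j k hij hjk ⟨h1, h2⟩
    rw [Fin.lt_def] at hij hjk h1 h2
    have hii := i.isLt; have hjj := j.isLt; have hkk := k.isLt
    rcases lt_trichotomy (k : ℕ) a with hk | hk | hk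
    · have hj : (j : ℕ) < a := by omega
      have hi : (i : ℕ) < a := by omega
      have e1 := glue_lt h w1 w2 i hi
      have e2 := glue_lt h w1 w2 j hj
      have e3 := glue_lt h w1 w2 k hk
      refine h1av ⟨i, hi⟩ ⟨j, hj⟩ ⟨k, hk⟩ (by rw [Fin.lt_def]; exact hij)
        (by rw [Fin.lt_def]; exact hjk) ⟨?_, ?_⟩ <;> rw [Fin.lt_def] <;> omega
    · have e3 := glue_eq h w1 w2 k hk
      have := (glue a h w1 w2 j).isLt; omega
    · rcases lt_trichotomy (j : ℕ) a with hj | hj | hj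
      · have hi : (i : ℕ) < a := by omega
        have e1 := glue_lt h w1 w2 i hi
        have e3 := glue_gt h w1 w2 k hk
        have := (w2 ⟨(k : ℕ) - (a + 1), by omega⟩).isLt
        have := (w1 ⟨(i : ℕ), hi⟩).isLt
        omega
      · have e2 := glue_eq h w1 w2 j hj
        rcases lt_trichotomy (i : ℕ) a with hi | hi | hi
        · have e1 := glue_lt h w1 w2 i hi
          have e3 := glue_gt h w1 w2 k hk
          have := (w2 ⟨(k : ℕ) - (a + 1), by omega⟩).isLt
          omega
        · have e1 := glue_eq h w1 w2 i hi
          have := (glue a h w1 w2 k).isLt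
          omega
        · omega
      · rcases lt_trichotomy (i : ℕ) a with hi | hi | hi
        · have e1 := glue_lt h w1 w2 i hi
          have e3 := glue_gt h w1 w2 k hk
          have := (w2 ⟨(k : ℕ) - (a + 1), by omega⟩).isLt
          omega
        · have e1 := glue_eq h w1 w2 i (by omega)
          have e3 := glue_gt h w1 w2 k hk
          have := (w2 ⟨(k : ℕ) - (a + 1), by omega⟩).isLt
          omega
        · have e1 := glue_gt h w1 w2 i hi
          have e2 := glue_gt h w1 w2 j hj
          have e3 := glue_gt h w1 w2 k hk
          refine h2av ⟨(i:ℕ) - (a+1), by omega⟩ ⟨(j:ℕ) - (a+1), by omega⟩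
            ⟨(k:ℕ) - (a+1), by omega⟩ (by rw [Fin.lt_def]; simp; omega)
            (by rw [Fin.lt_def]; simp; omega) ⟨?_, ?_⟩ <;> rw [Fin.lt_def] <;> omega

lemma glue_natlt {m a : ℕ} (h : a ≤ m) (w1 : Perm (Fin a)) (w2 : Perm (Fin (m - a)))
    (i : ℕ) (hi : i < a) :
    (glue a h w1 w2 ⟨i, by omega⟩ : ℕ) = (w1 ⟨i, hi⟩ : ℕ) + (m - a) := by
  rw [glue_lt h w1 w2 _ (by simpa using hi)]

lemma glue_nateq {m a : ℕ} (h : a ≤ m) (w1 : Perm (Fin a)) (w2 : Perm (Fin (m - a))) :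
    (glue a h w1 w2 ⟨a, by omega⟩ : ℕ) = m :=
  glue_eq h w1 w2 _ (by simp)

lemma glue_natgt {m a : ℕ} (h : a ≤ m) (w1 : Perm (Fin a)) (w2 : Perm (Fin (m - a)))
    (i : ℕ) (hi : a < i) (him : i < m + 1) :
    (glue a h w1 w2 ⟨i, him⟩ : ℕ) = (w2 ⟨i - (a + 1), by omega⟩ : ℕ) := by
  rw [glue_gt h w1 w2 _ (by simpa using hi)]

lemma w_congr {N : ℕ} (w : Perm (Fin N)) (x y : ℕ) (hx : x < N) (hy : y < N)
    (hxy : x = y) : (w ⟨x, hx⟩ : ℕ) = (w ⟨y, hy⟩ : ℕ) := by subst hxy; rfl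

lemma alternating_glue_iff {m a : ℕ} (h : a ≤ m) (ha : a % 2 = 1)
    (w1 : Perm (Fin a)) (w2 : Perm (Fin (m - a))) :
    Alternating (glue a h w1 w2) ↔ Alternating w1 ∧ Alternating w2 := by
  constructor
  · intro hg
    constructor
    · intro i hi1
      have e1 := glue_natlt h w1 w2 i (by omega)
      have e2 := glue_natlt h w1 w2 (i + 1) hi1
      have hgi := hg i (by omega)
      constructor <;> intro hpar <;> rw [Fin.lt_def]
      · have := hgi.1 hpar; rw [Fin.lt_def] at this; omega
      · have := hgi.2 hpar; rw [Fin.lt_def] at this; omega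
    · intro i hi1
      have e1 := glue_natgt h w1 w2 (a + 1 + i) (by omega) (by omega)
      have e2 := glue_natgt h w1 w2 (a + 1 + i + 1) (by omega) (by omega)
      have k1 := w_congr w2 (a + 1 + i - (a + 1)) i (by omega) (by omega) (by omega)
      have k2 := w_congr w2 (a + 1 + i + 1 - (a + 1)) (i + 1) (by omega) (by omega)
        (by omega)
      have hgi := hg (a + 1 + i) (by omega)
      constructor <;> intro hpar <;> rw [Fin.lt_def]
      · have := hgi.1 (by omega); rw [Fin.lt_def] at this; omega
      · have := hgi.2 (by omega); rw [Fin.lt_def] at this; omega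
  · rintro ⟨h1, h2⟩
    intro i hi1
    rcases lt_trichotomy (i + 1) a with hc | hc | hc
    · have e1 := glue_natlt h w1 w2 i (by omega)
      have e2 := glue_natlt h w1 w2 (i + 1) hc
      have h1i := h1 i hc
      constructor <;> intro hpar <;> rw [Fin.lt_def]
      · have := h1i.1 hpar; rw [Fin.lt_def] at this; omega
      · have := h1i.2 hpar; rw [Fin.lt_def] at this; omega
    · have e1 := glue_natlt h w1 w2 i (by omega)
      have e2 : (glue a h w1 w2 ⟨i + 1, by omega⟩ : ℕ) = m := by
        rw [glue_eq h w1 w2 _ (by simpa using hc)]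
      have hb := (w1 ⟨i, by omega⟩).isLt
      constructor <;> intro hpar <;> rw [Fin.lt_def] <;> omega
    · rcases lt_trichotomy i a with hc2 | hc2 | hc2
      · omega
      · have e1 : (glue a h w1 w2 ⟨i, by omega⟩ : ℕ) = m := by
          rw [glue_eq h w1 w2 _ (by simpa using hc2)]
        have e2 := glue_natgt h w1 w2 (i + 1) (by omega) hi1
        have hb := (w2 ⟨i + 1 - (a + 1), by omega⟩).isLt
        constructor <;> intro hpar <;> rw [Fin.lt_def] <;> omega
      · have e1 := glue_natgt h w1 w2 i hc2 (by omega)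
        have e2 := glue_natgt h w1 w2 (i + 1) (by omega) hi1
        have hj : i - (a + 1) + 1 < m - a := by omega
        have h2i := h2 (i - (a + 1)) hj
        have k2 := w_congr w2 (i + 1 - (a + 1)) (i - (a + 1) + 1) (by omega) hj (by omega)
        constructor <;> intro hpar <;> rw [Fin.lt_def]
        · have := h2i.1 (by omega); rw [Fin.lt_def] at this; omega
        · have := h2i.2 (by omega); rw [Fin.lt_def] at this; omega

def maxPos {m : ℕ} (w : Perm (Fin (m + 1))) : Fin (m + 1) := w.symm ⟨m, by omega⟩

lemma maxPos_glue {m a : ℕ} (h : a ≤ m) (w1 : Perm (Fin a)) (w2 : Perm (Fin (m - a))) :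
    maxPos (glue a h w1 w2) = ⟨a, by omega⟩ := by
  rw [maxPos, Equiv.symm_apply_eq]
  exact Fin.ext (glue_nateq h w1 w2).symm

lemma w_maxPos {m : ℕ} (w : Perm (Fin (m + 1))) : (w (maxPos w) : ℕ) = m := by
  rw [maxPos, Equiv.apply_symm_apply]

lemma exists_glue {m : ℕ} (w : Perm (Fin (m + 1))) (hw : Avoids132 w) (a : ℕ)
    (hma : (maxPos w : ℕ) = a) :
    ∃ (h : a ≤ m) (w1 : Perm (Fin a)) (w2 : Perm (Fin (m - a))), glue a h w1 w2 = w := by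
  have ha : a ≤ m := by have := (maxPos w).isLt; omega
  obtain ⟨A, hA⟩ : ∃ A : Fin (m + 1), (A : ℕ) = a := ⟨⟨a, by omega⟩, rfl⟩
  have hwa : (w A : ℕ) = m := by
    have h0 : A = maxPos w := Fin.ext (by rw [hA, hma])
    rw [h0, maxPos, Equiv.apply_symm_apply]
  rw [avoids132_iff] at hw
  -- only position a maps to m
  have honly : ∀ i : Fin (m + 1), (w i : ℕ) = m → (i : ℕ) = a := by
    intro i hi
    have : w i = w A := Fin.ext (by omega)
    have := w.injective this
    rw [this, hA]
  -- K1 : prefix values > suffix values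
  have K1 : ∀ i j : Fin (m + 1), (i : ℕ) < a → a < (j : ℕ) → (w j : ℕ) < (w i : ℕ) := by
    intro i j hi hj
    by_contra hcon
    push_neg at hcon
    have hne : (w i : ℕ) ≠ (w j : ℕ) := fun he =>
      (by omega : (i:ℕ) ≠ (j:ℕ)) (by
        have := w.injective (Fin.ext he : w i = w j); rw [this])
    have hjm : (w j : ℕ) < m := by
      have := (w j).isLt
      rcases Nat.lt_or_ge (w j : ℕ) m with h' | h'
      · exact h'
      · exact absurd (honly j (by omega)) (by omega)
    exact hw i A j (by rw [Fin.lt_def]; omega) (by rw [Fin.lt_def]; omega)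
      ⟨by rw [Fin.lt_def]; omega, by rw [Fin.lt_def]; omega⟩
  -- K2 : suffix values < m - a
  have K2 : ∀ j : Fin (m + 1), a < (j : ℕ) → (w j : ℕ) < m - a := by
    intro j hj
    have hcard : (Finset.Iio (w j)).card ≤
        ((Finset.Ioi A).erase j).card := by
      apply Finset.card_le_card_of_injOn (fun v => w.symm v)
      · intro v hv
        rw [Finset.mem_coe, Finset.mem_Iio] at hv
        simp only [Finset.mem_coe]
        rw [Finset.mem_erase]
        constructor
        · intro he
          rw [← he, Equiv.apply_symm_apply] at hv
          exact lt_irrefl _ hv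
        · rw [Finset.mem_Ioi, Fin.lt_def]
          rcases lt_trichotomy (a : ℕ) ((w.symm v : Fin (m+1)) : ℕ) with h' | h' | h'
          · omega
          · exfalso
            have h6 : w.symm v = A := Fin.ext (by omega)
            have : w (w.symm v) = v := Equiv.apply_symm_apply w v
            rw [h6] at this
            have hv2 : (v : ℕ) = m := by rw [← this]; exact hwa
            rw [Fin.lt_def] at hv
            have := (w j).isLt
            omega
          · exfalso
            have h5 := K1 (w.symm v) j h' hj
            rw [Equiv.apply_symm_apply] at h5
            rw [Fin.lt_def] at hv
            omega
      · intro x _ y _ hxy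
        exact w.symm.injective hxy
    rw [Fin.card_Iio, Finset.card_erase_of_mem (by rw [Finset.mem_Ioi, Fin.lt_def]; omega),
      Fin.card_Ioi] at hcard
    omega
  -- K4 : every small value is attained in the suffix
  have K4 : ∀ v : Fin (m + 1), (v : ℕ) < m - a → a < (w.symm v : ℕ) := by
    obtain ⟨B, hB⟩ : ∃ B : Fin (m + 1), (B : ℕ) = m - a := ⟨⟨m - a, by omega⟩, rfl⟩
    have hsurj := Finset.surj_on_of_inj_on_of_card_le
      (s := Finset.Ioi A) (t := Finset.Iio B)
      (fun x _ => w x)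
      (fun x hx => by
        rw [Finset.mem_Iio, Fin.lt_def]
        rw [Finset.mem_Ioi, Fin.lt_def] at hx
        show (w x : ℕ) < (B : ℕ)
        have := K2 x (by omega); omega)
      (fun x y _ _ hxy => w.injective hxy)
      (by rw [Fin.card_Ioi, Fin.card_Iio]; omega)
    intro v hv
    obtain ⟨x, hx, hvx⟩ := hsurj v (by rw [Finset.mem_Iio, Fin.lt_def]; omega)
    rw [Finset.mem_Ioi, Fin.lt_def] at hx
    rw [hvx, Equiv.symm_apply_apply]
    omega
  -- K3 : prefix values in [m - a, m)
  have K3 : ∀ i : Fin (m + 1), (i : ℕ) < a → m - a ≤ (w i : ℕ) ∧ (w i : ℕ) < m := by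
    intro i hi
    constructor
    · by_contra hcon
      push_neg at hcon
      have := K4 (w i) hcon
      rw [Equiv.symm_apply_apply] at this
      omega
    · have := (w i).isLt
      rcases Nat.lt_or_ge (w i : ℕ) m with h' | h'
      · exact h'
      · exact absurd (honly i (by omega)) (by omega)
  -- build w1
  have hf1 : ∀ x : Fin a, (w ⟨(x : ℕ), by omega⟩ : ℕ) - (m - a) < a := by
    intro x
    have := K3 ⟨(x : ℕ), by omega⟩ x.isLt
    omega
  set f1 : Fin a → Fin a := fun x => ⟨(w ⟨(x : ℕ), by omega⟩ : ℕ) - (m - a), hf1 x⟩ with hf1d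
  have hinj1 : Function.Injective f1 := by
    intro x y hxy
    have h3 := K3 ⟨(x : ℕ), by omega⟩ x.isLt
    have h4 := K3 ⟨(y : ℕ), by omega⟩ y.isLt
    rw [hf1d] at hxy
    simp only [Fin.mk.injEq] at hxy
    have : w ⟨(x : ℕ), by omega⟩ = w ⟨(y : ℕ), by omega⟩ := Fin.ext (by omega)
    have := w.injective this
    simp only [Fin.mk.injEq] at this
    exact Fin.ext this
  -- build w2
  have hf2 : ∀ x : Fin (m - a), (w ⟨a + 1 + (x : ℕ), by have := x.isLt; omega⟩ : ℕ) < m - a := by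
    intro x
    exact K2 _ (by show a < a + 1 + (x : ℕ); omega)
  set f2 : Fin (m - a) → Fin (m - a) :=
    fun x => ⟨(w ⟨a + 1 + (x : ℕ), by have := x.isLt; omega⟩ : ℕ), hf2 x⟩ with hf2d
  have hinj2 : Function.Injective f2 := by
    intro x y hxy
    rw [hf2d] at hxy
    simp only [Fin.mk.injEq] at hxy
    have : w ⟨a + 1 + (x : ℕ), by have := x.isLt; omega⟩
        = w ⟨a + 1 + (y : ℕ), by have := y.isLt; omega⟩ := Fin.ext hxy
    have := w.injective this
    simp only [Fin.mk.injEq] at this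
    exact Fin.ext (by omega)
  refine ⟨ha, Equiv.ofBijective f1 (Finite.injective_iff_bijective.mp hinj1),
    Equiv.ofBijective f2 (Finite.injective_iff_bijective.mp hinj2), ?_⟩
  set W1 := Equiv.ofBijective f1 (Finite.injective_iff_bijective.mp hinj1) with hW1
  set W2 := Equiv.ofBijective f2 (Finite.injective_iff_bijective.mp hinj2) with hW2
  apply Equiv.ext
  intro i
  apply Fin.ext
  rcases lt_trichotomy (i : ℕ) a with hc | hc | hc
  · have e1 : (glue a ha W1 W2 i : ℕ) = (f1 ⟨(i : ℕ), hc⟩ : ℕ) + (m - a) :=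
      glue_natlt ha W1 W2 (i : ℕ) hc
    have e2 : (f1 ⟨(i : ℕ), hc⟩ : ℕ) = (w i : ℕ) - (m - a) := rfl
    have h3 := K3 i hc
    omega
  · have e0 : glue a ha W1 W2 i = glue a ha W1 W2 ⟨a, by omega⟩ :=
      congrArg _ (Fin.ext (show (i : ℕ) = a from hc))
    have e1 : (glue a ha W1 W2 i : ℕ) = m := by rw [e0]; exact glue_nateq ha W1 W2
    have e2 : w i = w A := congrArg w (Fin.ext (by omega))
    rw [e1, e2, hwa]
  · have e1 : (glue a ha W1 W2 i : ℕ) = (f2 ⟨(i : ℕ) - (a + 1), by omega⟩ : ℕ) :=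
      glue_natgt ha W1 W2 (i : ℕ) hc i.isLt
    have e2 : (f2 ⟨(i : ℕ) - (a + 1), by omega⟩ : ℕ)
        = (w ⟨a + 1 + ((i : ℕ) - (a + 1)), by omega⟩ : ℕ) := rfl
    have e3 := w_congr w (a + 1 + ((i : ℕ) - (a + 1))) (i : ℕ) (by omega) i.isLt (by omega)
    have e4 : (w ⟨(i : ℕ), i.isLt⟩ : ℕ) = (w i : ℕ) := rfl
    omega

lemma glue_pair_inj {m a : ℕ} (h : a ≤ m) (w1 w1' : Perm (Fin a))
    (w2 w2' : Perm (Fin (m - a))) (he : glue a h w1 w2 = glue a h w1' w2') :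
    w1 = w1' ∧ w2 = w2' := by
  constructor
  · apply Equiv.ext
    intro x
    have e1 := glue_natlt h w1 w2 (x : ℕ) x.isLt
    have e2 := glue_natlt h w1' w2' (x : ℕ) x.isLt
    rw [he] at e1
    apply Fin.ext
    have ex : (w1 ⟨(x : ℕ), x.isLt⟩ : ℕ) = (w1 x : ℕ) := w_congr w1 _ _ _ x.isLt rfl
    have ex' : (w1' ⟨(x : ℕ), x.isLt⟩ : ℕ) = (w1' x : ℕ) := w_congr w1' _ _ _ x.isLt rfl
    omega
  · apply Equiv.ext
    intro x
    have hx := x.isLt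
    have e1 := glue_natgt h w1 w2 (a + 1 + (x : ℕ)) (by omega) (by omega)
    have e2 := glue_natgt h w1' w2' (a + 1 + (x : ℕ)) (by omega) (by omega)
    rw [he] at e1
    apply Fin.ext
    have ex := w_congr w2 (a + 1 + (x : ℕ) - (a + 1)) (x : ℕ) (by omega) hx (by omega)
    have ex' := w_congr w2' (a + 1 + (x : ℕ) - (a + 1)) (x : ℕ) (by omega) hx (by omega)
    have ex2 : (w2 ⟨(x : ℕ), hx⟩ : ℕ) = (w2 x : ℕ) := w_congr w2 _ _ _ hx rfl
    have ex2' : (w2' ⟨(x : ℕ), hx⟩ : ℕ) = (w2' x : ℕ) := w_congr w2' _ _ _ hx rfl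
    omega

lemma alt_maxPos_odd {n : ℕ} (w : Perm (Fin (2 * n + 2 + 1))) (hw : Alternating w) :
    (maxPos w : ℕ) % 2 = 1 := by
  by_contra hpar
  have hp := (maxPos w).isLt
  have hwp : (w (maxPos w) : ℕ) = 2 * n + 2 := by
    rw [maxPos, Equiv.apply_symm_apply]
  rcases Nat.lt_or_ge ((maxPos w : ℕ) + 1) (2 * n + 3) with hc | hc
  · have h1 := (hw (maxPos w : ℕ) hc).1 (by omega)
    rw [Fin.lt_def] at h1
    have e1 : (w ⟨((maxPos w : ℕ)), by omega⟩ : ℕ) = (w (maxPos w) : ℕ) :=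
      w_congr w _ _ _ (maxPos w).isLt rfl
    have := (w ⟨(maxPos w : ℕ) + 1, hc⟩).isLt
    omega
  · -- maxPos = 2n+2
    have h1 := (hw (2 * n + 1) (by omega)).2 (by omega)
    rw [Fin.lt_def] at h1
    have e1 : (w ⟨2 * n + 1 + 1, by omega⟩ : ℕ) = (w (maxPos w) : ℕ) :=
      w_congr w _ _ _ (maxPos w).isLt (by omega)
    have := (w ⟨2 * n + 1, by omega⟩).isLt
    omega

noncomputable def cntA (m : ℕ) : ℕ := Nat.card {w : Perm (Fin m) // Avoids132 w}
noncomputable def cntB (m : ℕ) : ℕ :=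
  Nat.card {w : Perm (Fin m) // Alternating w ∧ Avoids132 w}

lemma nat_card_sigma {N : ℕ} (β : Fin N → Type) [∀ a, Finite (β a)] :
    Nat.card (Σ a, β a) = ∑ a, Nat.card (β a) := by
  letI : ∀ a, Fintype (β a) := fun a => Fintype.ofFinite _
  simp [Nat.card_eq_fintype_card, Fintype.card_sigma]

lemma card_split {m : ℕ} (P : Perm (Fin (m + 1)) → Prop) :
    Nat.card {w : Perm (Fin (m + 1)) // P w}
      = ∑ a ∈ Finset.range (m + 1),
          Nat.card {w : Perm (Fin (m + 1)) // P w ∧ (maxPos w : ℕ) = a} := by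
  have e1 : {w : Perm (Fin (m + 1)) // P w}
      ≃ Σ a : Fin (m + 1), {w : Perm (Fin (m + 1)) // P w ∧ (maxPos w : ℕ) = (a : ℕ)} := by
    refine ((Equiv.sigmaFiberEquiv (fun x : {w : Perm (Fin (m + 1)) // P w} =>
      maxPos x.1)).symm).trans (Equiv.sigmaCongrRight fun a => ?_)
    exact (Equiv.subtypeSubtypeEquivSubtypeInter P (fun w => maxPos w = a)).trans
      (Equiv.subtypeEquivRight fun w => by rw [Fin.ext_iff])
  rw [Nat.card_congr e1, nat_card_sigma,
    Fin.sum_univ_eq_sum_range (fun a => Nat.card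
      {w : Perm (Fin (m + 1)) // P w ∧ (maxPos w : ℕ) = a}) (m + 1)]

lemma fiberA {m a : ℕ} (h : a ≤ m) :
    Nat.card {w : Perm (Fin (m + 1)) // Avoids132 w ∧ (maxPos w : ℕ) = a}
      = cntA a * cntA (m - a) := by
  rw [cntA, cntA, ← Nat.card_prod]
  apply Nat.card_congr
  apply Equiv.symm
  refine Equiv.ofBijective (fun p => ⟨glue a h p.1.1 p.2.1,
    (avoids_glue_iff h _ _).2 ⟨p.1.2, p.2.2⟩, by rw [maxPos_glue]⟩) ⟨?_, ?_⟩
  · rintro ⟨⟨w1, h1⟩, ⟨w2, h2⟩⟩ ⟨⟨w1', h1'⟩, ⟨w2', h2'⟩⟩ hpq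
    have := glue_pair_inj h w1 w1' w2 w2' (congrArg Subtype.val hpq)
    simp [Prod.ext_iff, Subtype.ext_iff, this.1, this.2]
  · rintro ⟨w, hav, hmax⟩
    obtain ⟨h', w1, w2, hg⟩ := exists_glue w hav a hmax
    have hcomp : Avoids132 w1 ∧ Avoids132 w2 := (avoids_glue_iff h' w1 w2).1 (by rw [hg]; exact hav)
    exact ⟨⟨⟨w1, hcomp.1⟩, ⟨w2, hcomp.2⟩⟩, Subtype.ext hg⟩

lemma fiberB {m a : ℕ} (h : a ≤ m) (hodd : a % 2 = 1) :
    Nat.card {w : Perm (Fin (m + 1)) //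
        (Alternating w ∧ Avoids132 w) ∧ (maxPos w : ℕ) = a}
      = cntB a * cntB (m - a) := by
  rw [cntB, cntB, ← Nat.card_prod]
  apply Nat.card_congr
  apply Equiv.symm
  refine Equiv.ofBijective (fun p => ⟨glue a h p.1.1 p.2.1,
    ⟨(alternating_glue_iff h hodd _ _).2 ⟨p.1.2.1, p.2.2.1⟩,
     (avoids_glue_iff h _ _).2 ⟨p.1.2.2, p.2.2.2⟩⟩, by rw [maxPos_glue]⟩) ⟨?_, ?_⟩
  · rintro ⟨⟨w1, h1⟩, ⟨w2, h2⟩⟩ ⟨⟨w1', h1'⟩, ⟨w2', h2'⟩⟩ hpq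
    have := glue_pair_inj h w1 w1' w2 w2' (congrArg Subtype.val hpq)
    simp [Prod.ext_iff, Subtype.ext_iff, this.1, this.2]
  · rintro ⟨w, ⟨halt, hav⟩, hmax⟩
    obtain ⟨h', w1, w2, hg⟩ := exists_glue w hav a hmax
    have hcomp : Avoids132 w1 ∧ Avoids132 w2 :=
      (avoids_glue_iff h' w1 w2).1 (by rw [hg]; exact hav)
    have hcomp2 : Alternating w1 ∧ Alternating w2 :=
      (alternating_glue_iff h' hodd w1 w2).1 (by rw [hg]; exact halt)
    exact ⟨⟨⟨w1, hcomp2.1, hcomp.1⟩, ⟨w2, hcomp2.2, hcomp.2⟩⟩, Subtype.ext hg⟩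

lemma fiberB_even {n a : ℕ} (hodd : a % 2 = 0) :
    Nat.card {w : Perm (Fin (2 * n + 2 + 1)) //
        (Alternating w ∧ Avoids132 w) ∧ (maxPos w : ℕ) = a} = 0 := by
  have : IsEmpty {w : Perm (Fin (2 * n + 2 + 1)) //
      (Alternating w ∧ Avoids132 w) ∧ (maxPos w : ℕ) = a} := by
    constructor
    rintro ⟨w, ⟨halt, _⟩, hmax⟩
    have := alt_maxPos_odd w halt
    omega
  exact Nat.card_of_isEmpty

lemma sumA (m : ℕ) :
    cntA (m + 1) = ∑ a ∈ Finset.range (m + 1), cntA a * cntA (m - a) := by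
  rw [cntA, card_split]
  apply Finset.sum_congr rfl
  intro a ha
  rw [Finset.mem_range] at ha
  exact fiberA (by omega)

lemma sum_odd_vanish (f : ℕ → ℕ) (hf : ∀ a, a % 2 = 0 → f a = 0) (N : ℕ) :
    ∑ a ∈ Finset.range (2 * N + 1), f a = ∑ k ∈ Finset.range N, f (2 * k + 1) := by
  induction N with
  | zero => simpa using hf 0 rfl
  | succ N ih =>
    rw [show 2 * (N + 1) + 1 = (2 * N + 1) + 1 + 1 by omega, Finset.sum_range_succ,
      Finset.sum_range_succ, ih, Finset.sum_range_succ, hf (2 * N + 1 + 1) (by omega)]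
    omega

lemma sumB (n : ℕ) :
    cntB (2 * (n + 1) + 1)
      = ∑ k ∈ Finset.range (n + 1), cntB (2 * k + 1) * cntB (2 * (n - k) + 1) := by
  have e0 : cntB (2 * (n + 1) + 1) = cntB (2 * n + 2 + 1) := by norm_num; ring_nf
  rw [e0, cntB, card_split]
  refine Eq.trans (sum_odd_vanish (fun a => Nat.card {w : Perm (Fin (2 * n + 2 + 1)) //
        (Alternating w ∧ Avoids132 w) ∧ (maxPos w : ℕ) = a})
      (fun a haeven => fiberB_even haeven) (n + 1)) ?_
  apply Finset.sum_congr rfl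
  intro k hk
  rw [Finset.mem_range] at hk
  rw [fiberB (by omega) (by omega),
    show (2 * n + 2 - (2 * k + 1) : ℕ) = 2 * (n - k) + 1 by omega]

lemma cntA_zero : cntA 0 = 1 := by
  rw [cntA]
  have hall : ∀ w : Perm (Fin 0), Avoids132 w := by
    rintro w ⟨f, -, -⟩
    exact (f 0).elim0
  rw [Nat.card_congr (Equiv.subtypeUnivEquiv hall)]
  simp [Nat.card_eq_fintype_card]

lemma cntB_one : cntB 1 = 1 := by
  rw [cntB]
  have hall : ∀ w : Perm (Fin 1), Alternating w ∧ Avoids132 w := by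
    intro w
    constructor
    · intro i hi; omega
    · rintro ⟨f, hf, -⟩
      have := hf (show (0 : Fin 3) < 1 by decide)
      exact absurd (Subsingleton.elim (f 0) (f 1)) (ne_of_lt this)
  rw [Nat.card_congr (Equiv.subtypeUnivEquiv hall)]
  simp [Nat.card_eq_fintype_card]

lemma cntA_catalan : ∀ m, cntA m = catalan m := by
  intro m
  induction m using Nat.strong_induction_on with
  | _ m ih =>
    match m with
    | 0 => rw [cntA_zero, catalan_zero]
    | m + 1 =>
      rw [sumA, catalan_succ,
        Fin.sum_univ_eq_sum_range (fun i => catalan i * catalan (m - i)) (m + 1)]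
      apply Finset.sum_congr rfl
      intro a ha
      rw [Finset.mem_range] at ha
      rw [ih a (by omega), ih (m - a) (by omega)]

lemma cntB_catalan : ∀ n, cntB (2 * n + 1) = catalan n := by
  intro n
  induction n using Nat.strong_induction_on with
  | _ n ih =>
    match n with
    | 0 => rw [show 2 * 0 + 1 = 1 by omega, cntB_one, catalan_zero]
    | n + 1 =>
      rw [sumB, catalan_succ,
        Fin.sum_univ_eq_sum_range (fun i => catalan i * catalan (n - i)) (n + 1)]
      apply Finset.sum_congr rfl
      intro k hk
      rw [Finset.mem_range] at hk
      rw [ih k (by omega), ih (n - k) (by omega)]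

/-- `a_{2n+1}(132)` equals the Catalan number `C_n`, hence equals
`s_n(132)`. -/
theorem stmt5 (n : ℕ) :
    Nat.card {w : Equiv.Perm (Fin (2 * n + 1)) // Alternating w ∧ Avoids132 w} =
      Nat.choose (2 * n) n / (n + 1) ∧
    Nat.card {w : Equiv.Perm (Fin (2 * n + 1)) // Alternating w ∧ Avoids132 w} =
      Nat.card {w : Equiv.Perm (Fin n) // Avoids132 w} := by
  have h1 : Nat.card {w : Equiv.Perm (Fin (2 * n + 1)) // Alternating w ∧ Avoids132 w}
      = catalan n := cntB_catalan n
  constructor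
  · rw [h1, catalan_eq_centralBinom_div, Nat.centralBinom]
  · rw [h1, ← cntA_catalan n, cntA]
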